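/- (Strict positive definiteness of the Gaussian kernel.) Fix σ > 0 and let k(x, y) = exp(−‖x − y‖²/(2σ²)) for x, y ∈ ℝ². Then for any N ≥ 1, any pairwise distinct points x_1, ..., x_N ∈ ℝ², and any c = (c_1, ..., c_N) ∈ ℝ^N with c ≠ 0, one has Σ_{i=1}^N Σ_{j=1}^N c_i c_j k(x_i, x_j) > 0; equivalently, the N × N Gram matrix (k(x_i, x_j))_{i,j} is positive definite. -/

import Mathlib

open Finset

/-- Key quadratic-form positivity for the Gaussian kernel on `ℝ²`. -/
lemma gaussian_quad_pos (σ : ℝ) (hσ : 0 < σ) (N : ℕ)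
    (x : Fin N → EuclideanSpace ℝ (Fin 2)) (hx : Function.Injective x)
    (c : Fin N → ℝ) (hc : c ≠ 0) :
    0 < ∑ i, ∑ j, c i * c j * Real.exp (-‖x i - x j‖ ^ 2 / (2 * σ ^ 2)) := by
  have hs : (0:ℝ) < (σ ^ 2)⁻¹ := by positivity
  set s : ℝ := (σ ^ 2)⁻¹ with hs_def
  set b : Fin N → ℝ := fun i => c i * Real.exp (-‖x i‖ ^ 2 / (2 * σ ^ 2)) with hb_def
  set p : Fin N → Fin N → ℝ := fun i j => x i 0 * x j 0 + x i 1 * x j 1 with hp_def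
  have hinner : ∀ u v : EuclideanSpace ℝ (Fin 2),
      (inner ℝ u v : ℝ) = u 0 * v 0 + u 1 * v 1 := by
    intro u v
    simp [PiLp.inner_apply, Fin.sum_univ_two, RCLike.inner_apply, mul_comm]
  have hσ2 : (σ:ℝ) ^ 2 ≠ 0 := by positivity
  have hpoint : ∀ i j, c i * c j * Real.exp (-‖x i - x j‖ ^ 2 / (2 * σ ^ 2))
      = b i * b j * Real.exp (s * p i j) := by
    intro i j
    have h1 : -‖x i - x j‖ ^ 2 / (2 * σ ^ 2)
        = -‖x i‖ ^ 2 / (2 * σ ^ 2) + -‖x j‖ ^ 2 / (2 * σ ^ 2) + s * p i j := by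
      rw [show ‖x i - x j‖ ^ 2 = ‖x i‖ ^ 2 - 2 * (inner ℝ (x i) (x j) : ℝ) + ‖x j‖ ^ 2 from
        norm_sub_sq_real _ _, hinner, hs_def]
      field_simp
      ring
    rw [h1, Real.exp_add, Real.exp_add, hb_def]
    ring
  set v : Fin N → Fin N → ℕ → ℝ :=
    fun i j n => b i * b j * ((s * p i j) ^ n / n.factorial) with hv_def
  have hsumv : ∀ i j, Summable (v i j) :=
    fun i j => (Real.summable_pow_div_factorial (s * p i j)).mul_left _
  set T : ℕ → ℝ := fun n => ∑ i, ∑ j, b i * b j * p i j ^ n with hT_def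
  set u : ℕ → ℝ := fun n => s ^ n / n.factorial * T n with hu_def
  have hun : ∀ n, ∑ i, ∑ j, v i j n = u n := by
    intro n
    show ∑ i, ∑ j, v i j n = s ^ n / n.factorial * ∑ i, ∑ j, b i * b j * p i j ^ n
    rw [Finset.mul_sum]
    refine Finset.sum_congr rfl fun i _ => ?_
    rw [Finset.mul_sum]
    refine Finset.sum_congr rfl fun j _ => ?_
    show b i * b j * ((s * p i j) ^ n / ↑n.factorial)
      = s ^ n / ↑n.factorial * (b i * b j * p i j ^ n)
    rw [mul_pow]
    ring
  have hQ : ∑ i, ∑ j, c i * c j * Real.exp (-‖x i - x j‖ ^ 2 / (2 * σ ^ 2))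
      = ∑' n : ℕ, u n := by
    calc ∑ i, ∑ j, c i * c j * Real.exp (-‖x i - x j‖ ^ 2 / (2 * σ ^ 2))
        = ∑ i, ∑ j, ∑' n : ℕ, v i j n := by
          refine Finset.sum_congr rfl fun i _ => Finset.sum_congr rfl fun j _ => ?_
          rw [hpoint i j, Real.exp_eq_exp_ℝ, NormedSpace.exp_eq_tsum_div, hv_def,
            tsum_mul_left]
      _ = ∑ i, ∑' n : ℕ, ∑ j, v i j n := by
          refine Finset.sum_congr rfl fun i _ => ?_
          exact (Summable.tsum_finsetSum fun j _ => hsumv i j).symm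
      _ = ∑' n : ℕ, ∑ i, ∑ j, v i j n :=
          (Summable.tsum_finsetSum fun i _ => summable_sum fun j _ => hsumv i j).symm
      _ = ∑' n : ℕ, u n := by
          refine tsum_congr fun n => hun n
  have hsumu : Summable u := by
    have : Summable (fun n => ∑ i, ∑ j, v i j n) :=
      summable_sum fun i _ => summable_sum fun j _ => hsumv i j
    exact this.congr hun
  set S : ℕ → ℕ → ℝ := fun n kk => ∑ i, b i * x i 0 ^ kk * x i 1 ^ (n - kk) with hS_def
  have hTexp : ∀ n, T n = ∑ kk ∈ range (n+1), (n.choose kk : ℝ) * S n kk ^ 2 := by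
    intro n
    have h1 : ∀ i j : Fin N, b i * b j * p i j ^ n
        = ∑ kk ∈ range (n+1), (n.choose kk : ℝ)
            * (b i * x i 0 ^ kk * x i 1 ^ (n - kk))
            * (b j * x j 0 ^ kk * x j 1 ^ (n - kk)) := by
      intro i j
      rw [hp_def]
      show b i * b j * (x i 0 * x j 0 + x i 1 * x j 1) ^ n = _
      rw [add_pow, Finset.mul_sum]
      refine Finset.sum_congr rfl fun kk _ => ?_
      rw [mul_pow, mul_pow]
      ring
    calc T n = ∑ i, ∑ j, ∑ kk ∈ range (n+1), (n.choose kk : ℝ)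
            * (b i * x i 0 ^ kk * x i 1 ^ (n - kk))
            * (b j * x j 0 ^ kk * x j 1 ^ (n - kk)) := by
          rw [hT_def]
          exact Finset.sum_congr rfl fun i _ => Finset.sum_congr rfl fun j _ => h1 i j
      _ = ∑ kk ∈ range (n+1), ∑ i, ∑ j, (n.choose kk : ℝ)
            * (b i * x i 0 ^ kk * x i 1 ^ (n - kk))
            * (b j * x j 0 ^ kk * x j 1 ^ (n - kk)) := by
          rw [show (∑ i : Fin N, ∑ j : Fin N, ∑ kk ∈ range (n+1), (n.choose kk : ℝ)
            * (b i * x i 0 ^ kk * x i 1 ^ (n - kk))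
            * (b j * x j 0 ^ kk * x j 1 ^ (n - kk)))
            = ∑ i : Fin N, ∑ kk ∈ range (n+1), ∑ j : Fin N, (n.choose kk : ℝ)
            * (b i * x i 0 ^ kk * x i 1 ^ (n - kk))
            * (b j * x j 0 ^ kk * x j 1 ^ (n - kk)) from
            Finset.sum_congr rfl fun i _ => Finset.sum_comm]
          exact Finset.sum_comm
      _ = ∑ kk ∈ range (n+1), (n.choose kk : ℝ) * S n kk ^ 2 := by
          refine Finset.sum_congr rfl fun kk _ => ?_
          rw [hS_def, sq, Finset.sum_mul_sum, Finset.mul_sum]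
          refine Finset.sum_congr rfl fun i _ => ?_
          rw [Finset.mul_sum]
          exact Finset.sum_congr rfl fun j _ => by ring
  have hTnn : ∀ n, 0 ≤ T n := by
    intro n
    rw [hTexp]
    exact Finset.sum_nonneg fun kk _ => by positivity
  have hex : ∃ n, 0 < T n := by
    by_contra h
    push_neg at h
    have hT0 : ∀ n, T n = 0 := fun n => le_antisymm (h n) (hTnn n)
    have hmom : ∀ a b' : ℕ, ∑ i, b i * x i 0 ^ a * x i 1 ^ b' = 0 := by
      intro a b'
      have h1 := hT0 (a + b')
      rw [hTexp] at h1
      have h2 := (Finset.sum_eq_zero_iff_of_nonneg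
        (fun kk _ => by positivity)).mp h1 a (by simp [Finset.mem_range])
      have hch : (0:ℝ) < ((a + b').choose a : ℝ) := by
        exact_mod_cast Nat.choose_pos (by omega)
      have h3 : S (a + b') a ^ 2 = 0 := by
        rcases mul_eq_zero.mp h2 with h4 | h4
        · exact absurd h4 (ne_of_gt hch)
        · exact h4
      have h5 : S (a + b') a = 0 := by
        exact pow_eq_zero_iff (by norm_num) |>.mp h3
      rw [hS_def] at h5
      simpa using h5
    have hpoly : ∀ q : MvPolynomial (Fin 2) ℝ,
        ∑ i, b i * MvPolynomial.eval (fun t => x i t) q = 0 := by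
      intro q
      induction q using MvPolynomial.induction_on' with
      | monomial d a =>
        have hev : ∀ i : Fin N, MvPolynomial.eval (fun t => x i t)
            (MvPolynomial.monomial d a) = a * (x i 0 ^ d 0 * x i 1 ^ d 1) := by
          intro i
          rw [MvPolynomial.eval_monomial,
            Finsupp.prod_fintype _ _ (fun _ => pow_zero _), Fin.prod_univ_two]
        calc ∑ i, b i * MvPolynomial.eval (fun t => x i t) (MvPolynomial.monomial d a)
            = a * ∑ i, b i * x i 0 ^ d 0 * x i 1 ^ d 1 := by
              rw [Finset.mul_sum]
              refine Finset.sum_congr rfl fun i _ => ?_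
              rw [hev i]; ring
          _ = 0 := by rw [hmom]; ring
      | add q1 q2 hq1 hq2 =>
        simp only [MvPolynomial.eval_add, mul_add, Finset.sum_add_distrib, hq1, hq2,
          add_zero]
    have hb0 : ∀ j, b j = 0 := by
      intro j
      set q : MvPolynomial (Fin 2) ℝ := ∏ i ∈ univ.erase j,
        (MvPolynomial.C (x j 0 - x i 0) * MvPolynomial.X 0
          + MvPolynomial.C (x j 1 - x i 1) * MvPolynomial.X 1
          - MvPolynomial.C ((x j 0 - x i 0) * x i 0 + (x j 1 - x i 1) * x i 1))
        with hq_def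
      have heval : ∀ m : Fin N, MvPolynomial.eval (fun t => x m t) q
          = ∏ i ∈ univ.erase j,
            ((x j 0 - x i 0) * (x m 0 - x i 0) + (x j 1 - x i 1) * (x m 1 - x i 1)) := by
        intro m
        rw [hq_def, map_prod]
        refine Finset.prod_congr rfl fun i _ => ?_
        simp only [map_sub, map_add, map_mul, MvPolynomial.eval_C, MvPolynomial.eval_X]
        ring
      have hzero : ∀ m : Fin N, m ≠ j → MvPolynomial.eval (fun t => x m t) q = 0 := by
        intro m hm
        rw [heval]
        exact Finset.prod_eq_zero (Finset.mem_erase.mpr ⟨hm, Finset.mem_univ m⟩) (by ring)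
      have hposj : 0 < MvPolynomial.eval (fun t => x j t) q := by
        rw [heval]
        refine Finset.prod_pos fun i hi => ?_
        have hij : x i ≠ x j := fun h =>
          (Finset.mem_erase.mp hi).1 (hx h)
        have hne : x j 0 - x i 0 ≠ 0 ∨ x j 1 - x i 1 ≠ 0 := by
          by_contra hcon
          push_neg at hcon
          apply hij
          have e0 : x i 0 = x j 0 := by linarith [hcon.1]
          have e1 : x i 1 = x j 1 := by linarith [hcon.2]
          ext t
          fin_cases t
          · exact e0
          · exact e1
        rcases hne with h4 | h4
        · have h5 : 0 < (x j 0 - x i 0) * (x j 0 - x i 0) := mul_self_pos.mpr h4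
          nlinarith [mul_self_nonneg (x j 1 - x i 1)]
        · have h5 : 0 < (x j 1 - x i 1) * (x j 1 - x i 1) := mul_self_pos.mpr h4
          nlinarith [mul_self_nonneg (x j 0 - x i 0)]
      have h6 := hpoly q
      rw [Finset.sum_eq_single j
        (fun m _ hm => by rw [hzero m hm]; ring)
        (fun hj => absurd (Finset.mem_univ j) hj)] at h6
      rcases mul_eq_zero.mp h6 with h7 | h7
      · exact h7
      · exact absurd h7 (ne_of_gt hposj)
    apply hc
    funext j
    have h8 := hb0 j
    rw [hb_def] at h8
    have h9 : c j * Real.exp (-‖x j‖ ^ 2 / (2 * σ ^ 2)) = 0 := h8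
    rcases mul_eq_zero.mp h9 with h10 | h10
    · exact h10
    · exact absurd h10 (Real.exp_ne_zero _)
  obtain ⟨n₀, hn₀⟩ := hex
  rw [hQ]
  have hposu : 0 < u n₀ := by
    rw [hu_def]
    exact mul_pos (by positivity) hn₀
  refine lt_of_lt_of_le hposu (Summable.le_tsum hsumu n₀ fun m _ => ?_)
  rw [hu_def]
  exact mul_nonneg (by positivity) (hTnn m)

/-- (Strict positive definiteness of the Gaussian kernel.)
Fix `σ > 0` and let `k(x, y) = exp(−‖x − y‖²/(2σ²))` for `x, y ∈ ℝ²`.  Then for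
any `N ≥ 1`, any pairwise distinct points `x₁, …, x_N ∈ ℝ²`, and any nonzero
`c ∈ ℝ^N`, one has `Σᵢ Σⱼ cᵢ cⱼ k(xᵢ, xⱼ) > 0`; equivalently, the `N × N` Gram
matrix `(k(xᵢ, xⱼ))` is positive definite. -/
theorem gaussian_kernel_strictly_positive_definite
    (σ : ℝ) (hσ : 0 < σ)
    (k : EuclideanSpace ℝ (Fin 2) → EuclideanSpace ℝ (Fin 2) → ℝ)
    (hk : ∀ x y, k x y = Real.exp (-‖x - y‖ ^ 2 / (2 * σ ^ 2)))
    (N : ℕ) (hN : 1 ≤ N) (x : Fin N → EuclideanSpace ℝ (Fin 2))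
    (hx : Function.Injective x) :
    (∀ c : Fin N → ℝ, c ≠ 0 → 0 < ∑ i, ∑ j, c i * c j * k (x i) (x j)) ∧
      (Matrix.of fun i j => k (x i) (x j)).PosDef := by
  have key : ∀ c : Fin N → ℝ, c ≠ 0 → 0 < ∑ i, ∑ j, c i * c j * k (x i) (x j) := by
    intro c hc
    simp only [hk]
    exact gaussian_quad_pos σ hσ N x hx c hc
  refine ⟨key, Matrix.posDef_iff_dotProduct_mulVec.mpr ⟨?_, ?_⟩⟩
  · refine Matrix.ext fun i j => ?_
    simp only [Matrix.conjTranspose_apply, Matrix.of_apply, star_trivial, hk]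
    rw [norm_sub_rev]
  · intro c hc
    have h := key c hc
    have heq : dotProduct (star c) ((Matrix.of fun i j => k (x i) (x j)).mulVec c)
        = ∑ i, ∑ j, c i * c j * k (x i) (x j) := by
      simp only [dotProduct, Matrix.mulVec, Matrix.of_apply, Pi.star_apply,
        star_trivial, Finset.mul_sum]
      exact Finset.sum_congr rfl fun i _ => Finset.sum_congr rfl fun j _ => by ring
    rw [heq]
    exact h
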